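/- Let A be a commutative ring, R a commutative A-algebra that is flat as an A-module, and B a commutative A-algebra. Then the natural map Δ_{R/A} ⊗_A B → Δ_{(R⊗_A B)/B} is an isomorphism, where Δ denotes the kernel of the multiplication map on the tensor square. -/

import Mathlib

open TensorProduct
attribute [local instance] Algebra.TensorProduct.rightAlgebra

noncomputable section DeltaAux
variable (A R B : Type*) [CommRing A] [CommRing R] [Algebra A R]
    [CommRing B] [Algebra A B]

/-- The map `R ⊗[A] R → (R ⊗[A] B) ⊗[B] (R ⊗[A] B)`, `r ⊗ s ↦ (r ⊗ 1) ⊗ (s ⊗ 1)`. -/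
def deltaPsi : (R ⊗[A] R) →ₐ[A] ((R ⊗[A] B) ⊗[B] (R ⊗[A] B)) :=
  Algebra.TensorProduct.productMap
    (((Algebra.TensorProduct.includeLeft : _ →ₐ[B] _).restrictScalars A).comp
      (Algebra.TensorProduct.includeLeft : R →ₐ[A] R ⊗[A] B))
    (((Algebra.TensorProduct.includeRight : _ →ₐ[B] _).restrictScalars A).comp
      (Algebra.TensorProduct.includeLeft : R →ₐ[A] R ⊗[A] B))

lemma deltaPsi_tmul (r s : R) :
    deltaPsi A R B (r ⊗ₜ[A] s) = (r ⊗ₜ[A] (1:B)) ⊗ₜ[B] (s ⊗ₜ[A] (1:B)) := by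
  simp [deltaPsi, Algebra.TensorProduct.productMap_apply_tmul,
    Algebra.TensorProduct.tmul_mul_tmul]

/-- The canonical map `(R ⊗[A] R) ⊗[A] B → (R ⊗[A] B) ⊗[B] (R ⊗[A] B)`. -/
def deltaF : ((R ⊗[A] R) ⊗[A] B) →ₐ[A] ((R ⊗[A] B) ⊗[B] (R ⊗[A] B)) :=
  Algebra.TensorProduct.productMap (deltaPsi A R B) (IsScalarTower.toAlgHom A B _)

lemma deltaF_tmul (x : R ⊗[A] R) (b : B) :
    deltaF A R B (x ⊗ₜ[A] b) = deltaPsi A R B x * algebraMap B _ b := rfl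

lemma deltaF_tmul' (r₁ r₂ : R) (b : B) :
    deltaF A R B ((r₁ ⊗ₜ[A] r₂) ⊗ₜ[A] b) = (r₁ ⊗ₜ[A] b) ⊗ₜ[B] (r₂ ⊗ₜ[A] (1:B)) := by
  rw [deltaF_tmul, deltaPsi_tmul]
  rw [Algebra.TensorProduct.algebraMap_apply, Algebra.TensorProduct.tmul_mul_tmul]
  simp [RingHom.algebraMap_toAlgebra, Algebra.TensorProduct.tmul_mul_tmul]

def deltaG1 : (R ⊗[A] B) →ₐ[B] ((R ⊗[A] R) ⊗[A] B) :=
  { (Algebra.TensorProduct.map (Algebra.TensorProduct.includeLeft : R →ₐ[A] R ⊗[A] R)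
      (AlgHom.id A B)).toRingHom with
    commutes' := fun b => by
      simp [Algebra.TensorProduct.algebraMap_apply, RingHom.algebraMap_toAlgebra,
        Algebra.TensorProduct.one_def] }

def deltaG2 : (R ⊗[A] B) →ₐ[B] ((R ⊗[A] R) ⊗[A] B) :=
  { (Algebra.TensorProduct.map (Algebra.TensorProduct.includeRight : R →ₐ[A] R ⊗[A] R)
      (AlgHom.id A B)).toRingHom with
    commutes' := fun b => by
      simp [Algebra.TensorProduct.algebraMap_apply, RingHom.algebraMap_toAlgebra,
        Algebra.TensorProduct.one_def] }

/-- The inverse map `(R ⊗[A] B) ⊗[B] (R ⊗[A] B) → (R ⊗[A] R) ⊗[A] B`. -/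
def deltaG : ((R ⊗[A] B) ⊗[B] (R ⊗[A] B)) →ₐ[B] ((R ⊗[A] R) ⊗[A] B) :=
  Algebra.TensorProduct.productMap (deltaG1 A R B) (deltaG2 A R B)

lemma deltaG_tmul (r₁ r₂ : R) (b₁ b₂ : B) :
    deltaG A R B ((r₁ ⊗ₜ[A] b₁) ⊗ₜ[B] (r₂ ⊗ₜ[A] b₂)) = (r₁ ⊗ₜ[A] r₂) ⊗ₜ[A] (b₁ * b₂) := by
  simp [deltaG, deltaG1, deltaG2, Algebra.TensorProduct.productMap_apply_tmul,
    Algebra.TensorProduct.tmul_mul_tmul, AlgHom.toRingHom_eq_coe]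

lemma deltaGF : ∀ x, deltaG A R B (deltaF A R B x) = x := by
  intro x
  induction x using TensorProduct.induction_on with
  | zero => simp
  | add x y hx hy => simp [map_add, hx, hy]
  | tmul y b =>
    induction y using TensorProduct.induction_on with
    | zero => simp
    | add x y hx hy => simp only [add_tmul, map_add, hx, hy]
    | tmul r₁ r₂ => rw [deltaF_tmul', deltaG_tmul, mul_one]

lemma deltaFG : ∀ x, deltaF A R B (deltaG A R B x) = x := by
  intro x
  induction x using TensorProduct.induction_on with
  | zero => simp
  | add x y hx hy => simp [map_add, hx, hy]
  | tmul s₁ s₂ =>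
    induction s₁ using TensorProduct.induction_on with
    | zero => simp
    | add x y hx hy => simp only [add_tmul, map_add, hx, hy]
    | tmul r₁ b₁ =>
      induction s₂ using TensorProduct.induction_on with
      | zero => simp
      | add x y hx hy => simp only [tmul_add, map_add, hx, hy]
      | tmul r₂ b₂ =>
        rw [deltaG_tmul, deltaF_tmul']
        rw [show (r₂ ⊗ₜ[A] b₂ : R ⊗[A] B) = b₂ • (r₂ ⊗ₜ[A] (1:B)) by
          rw [Algebra.smul_def, RingHom.algebraMap_toAlgebra]
          simp [Algebra.TensorProduct.tmul_mul_tmul]]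
        rw [tmul_smul, smul_tmul']
        congr 1
        rw [Algebra.smul_def, RingHom.algebraMap_toAlgebra]
        simp [Algebra.TensorProduct.tmul_mul_tmul, mul_comm]

lemma deltaF_bij : Function.Bijective (deltaF A R B) :=
  Function.bijective_iff_has_inverse.2
    ⟨deltaG A R B, deltaGF A R B, deltaFG A R B⟩

lemma deltaF_mul_compat (x : (R ⊗[A] R) ⊗[A] B) :
    Algebra.TensorProduct.lmul' B (S := R ⊗[A] B) (deltaF A R B x) =
      LinearMap.rTensor B (Algebra.TensorProduct.lmul' A (S := R)).toLinearMap x := by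
  induction x using TensorProduct.induction_on with
  | zero => simp
  | add x y hx hy => simp [map_add, hx, hy]
  | tmul y b =>
    induction y using TensorProduct.induction_on with
    | zero => simp
    | add x y hx hy => simp only [add_tmul, map_add, hx, hy]
    | tmul r₁ r₂ =>
      rw [deltaF_tmul']
      simp [Algebra.TensorProduct.lmul'_apply_tmul, Algebra.TensorProduct.tmul_mul_tmul]

end DeltaAux

/-- Let `A` be a commutative ring, `R` a flat commutative `A`-algebra and `B` a commutative
`A`-algebra.  Writing `Δ_{R/A} = ker(R ⊗[A] R → R)` and `Δ_{R_B/B} = ker(R_B ⊗[B] R_B → R_B)`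
where `R_B = R ⊗[A] B`, the natural map `Δ_{R/A} ⊗[A] B → Δ_{R_B/B}` (induced by the
canonical ring map `ψ : R ⊗[A] R → R_B ⊗[B] R_B`, `r ⊗ s ↦ (r ⊗ 1) ⊗ (s ⊗ 1)`) is an
isomorphism: it is injective with image exactly `Δ_{R_B/B}`. -/
theorem delta_base_change {A R B : Type*} [CommRing A] [CommRing R] [Algebra A R]
    [CommRing B] [Algebra A B] [Module.Flat A R] :
    ∃ ψ : (R ⊗[A] R) →+* ((R ⊗[A] B) ⊗[B] (R ⊗[A] B)),
      (∀ r s : R, ψ (r ⊗ₜ[A] s) = (r ⊗ₜ[A] (1 : B)) ⊗ₜ[B] (s ⊗ₜ[A] (1 : B))) ∧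
      ∃ φ : (↥((RingHom.ker (Algebra.TensorProduct.lmul' A (S := R))).restrictScalars A)
              ⊗[A] B) →ₗ[A] ((R ⊗[A] B) ⊗[B] (R ⊗[A] B)),
        (∀ (x : ↥((RingHom.ker (Algebra.TensorProduct.lmul' A (S := R))).restrictScalars A))
            (b : B), φ (x ⊗ₜ[A] b) = algebraMap B _ b * ψ (x : R ⊗[A] R)) ∧
        Function.Injective φ ∧
        (Set.range φ =
          ↑(RingHom.ker (Algebra.TensorProduct.lmul' B (S := R ⊗[A] B)))) := by
  classical
  set Δ : Submodule A (R ⊗[A] R) :=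
    (RingHom.ker (Algebra.TensorProduct.lmul' A (S := R))).restrictScalars A with hΔ
  set mulLin : (R ⊗[A] R) →ₗ[A] R :=
    (Algebra.TensorProduct.lmul' A (S := R)).toLinearMap with hmulLin
  have hmemΔ : ∀ x : R ⊗[A] R, x ∈ Δ ↔ mulLin x = 0 := by
    intro x
    rw [hΔ, Submodule.restrictScalars_mem, RingHom.mem_ker]
    rfl
  set sec : R →ₗ[A] R ⊗[A] R :=
    (Algebra.TensorProduct.includeLeft : R →ₐ[A] R ⊗[A] R).toLinearMap with hsec
  have hms : ∀ r : R, mulLin (sec r) = r := by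
    intro r
    simp [hsec, hmulLin, Algebra.TensorProduct.lmul'_apply_tmul]
  set p : (R ⊗[A] R) →ₗ[A] R ⊗[A] R := LinearMap.id - sec ∘ₗ mulLin with hp
  have hpmem : ∀ x, p x ∈ Δ := by
    intro x
    rw [hmemΔ]
    simp [hp, map_sub, hms]
  set q : (R ⊗[A] R) →ₗ[A] Δ := p.codRestrict Δ hpmem with hq
  have hqs : q ∘ₗ Δ.subtype = LinearMap.id := by
    ext x
    have : mulLin (x : R ⊗[A] R) = 0 := (hmemΔ _).1 x.2
    simp [hq, hp, this]
  have hsub_inj : Function.Injective (LinearMap.rTensor B Δ.subtype) := by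
    have : (LinearMap.rTensor B q) ∘ₗ (LinearMap.rTensor B Δ.subtype) = LinearMap.id := by
      rw [← LinearMap.rTensor_comp, hqs, LinearMap.rTensor_id]
    have hli : Function.LeftInverse (LinearMap.rTensor B q)
        (LinearMap.rTensor B Δ.subtype) := fun x => by
      rw [← LinearMap.comp_apply, this, LinearMap.id_apply]
    exact hli.injective
  have hker : LinearMap.range (LinearMap.rTensor B Δ.subtype) =
      LinearMap.ker (LinearMap.rTensor B mulLin) := by
    apply le_antisymm
    · rintro _ ⟨y, rfl⟩
      rw [LinearMap.mem_ker, ← LinearMap.comp_apply, ← LinearMap.rTensor_comp]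
      have : mulLin ∘ₗ Δ.subtype = 0 := by
        ext x
        exact (hmemΔ _).1 x.2
      rw [this, LinearMap.rTensor_zero, LinearMap.zero_apply]
    · intro x hx
      rw [LinearMap.mem_ker] at hx
      refine ⟨LinearMap.rTensor B q x, ?_⟩
      have hps : Δ.subtype ∘ₗ q = p := by ext x; rfl
      rw [← LinearMap.comp_apply, ← LinearMap.rTensor_comp, hps, hp,
        LinearMap.rTensor_sub, LinearMap.sub_apply, LinearMap.rTensor_id,
        LinearMap.id_apply, LinearMap.rTensor_comp, LinearMap.comp_apply, hx,
        map_zero, sub_zero]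
  refine ⟨(deltaPsi A R B).toRingHom, fun r s => deltaPsi_tmul A R B r s, ?_⟩
  refine ⟨(deltaF A R B).toLinearMap ∘ₗ (LinearMap.rTensor B Δ.subtype), ?_, ?_, ?_⟩
  · intro x b
    simp only [LinearMap.coe_comp, Function.comp_apply, LinearMap.rTensor_tmul,
      Submodule.coe_subtype, AlgHom.toLinearMap_apply]
    rw [deltaF_tmul, mul_comm]
    rfl
  · rw [LinearMap.coe_comp]
    exact Function.Injective.comp (deltaF_bij A R B).injective hsub_inj
  · have h1 : Set.range ((deltaF A R B).toLinearMap ∘ₗ (LinearMap.rTensor B Δ.subtype)) =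
        deltaF A R B '' (LinearMap.ker (LinearMap.rTensor B mulLin) : Set _) := by
      rw [LinearMap.coe_comp, Set.range_comp, ← LinearMap.coe_range
        (LinearMap.rTensor B Δ.subtype), hker]
      rfl
    rw [h1]
    have h2 : (LinearMap.ker (LinearMap.rTensor B mulLin) : Set _) =
        deltaF A R B ⁻¹' ↑(RingHom.ker (Algebra.TensorProduct.lmul' B (S := R ⊗[A] B))) := by
      ext x
      simp only [SetLike.mem_coe, LinearMap.mem_ker, Set.mem_preimage, RingHom.mem_ker,
        ← deltaF_mul_compat A R B x]
      rw [deltaF_mul_compat A R B x, hmulLin]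
    rw [h2, Set.image_preimage_eq _ (deltaF_bij A R B).surjective]
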